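/- Let M and N be real matrices of the same dimensions m × n. Then there exist matrices N₁ and N₂ of the same dimensions such that: (1) N = N₁ + N₂; (2) rank(N₁) ≤ 2·rank(M); (3) M·N₂ᵀ = 0 and Mᵀ·N₂ = 0; (4) ⟨N₁, N₂⟩ = 0, where ⟨X, Y⟩ = tr(YᵀX) denotes the Frobenius inner product. -/

import Mathlib

open Matrix Filter

/-- The singular values of a real `m × n` matrix: square roots of the eigenvalues of `X * Xᵀ`. -/
noncomputable def sv {m n : ℕ} (X : Matrix (Fin m) (Fin n) ℝ) : Fin m → ℝ :=
  fun i => Real.sqrt ((Matrix.isHermitian_mul_conjTranspose_self X).eigenvalues i)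

/-- The singular values arranged in descending order: `svSorted X 0 ≥ svSorted X 1 ≥ ⋯`. -/
noncomputable def svSorted {m n : ℕ} (X : Matrix (Fin m) (Fin n) ℝ) : Fin m → ℝ :=
  fun i => sv X (Tuple.sort (sv X) i.rev)

/-- `P_a(X) = Σᵢ a σᵢ(X)/(a σᵢ(X) + 1)`. -/
noncomputable def Pa {m n : ℕ} (a : ℝ) (X : Matrix (Fin m) (Fin n) ℝ) : ℝ :=
  ∑ i, a * sv X i / (a * sv X i + 1)

/-- Frobenius norm. -/
noncomputable def frobNorm {m n : ℕ} (X : Matrix (Fin m) (Fin n) ℝ) : ℝ :=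
  Real.sqrt (∑ i, ∑ j, (X i j) ^ 2)

/-- Nuclear norm: the sum of the singular values. -/
noncomputable def nuclearNorm {m n : ℕ} (X : Matrix (Fin m) (Fin n) ℝ) : ℝ :=
  ∑ i, sv X i

/-- The rectangular `m × n` "diagonal" matrix with diagonal entries `σ`. -/
def diagRect {m n : ℕ} (σ : Fin m → ℝ) : Matrix (Fin m) (Fin n) ℝ :=
  Matrix.of fun i j => if (j : ℕ) = (i : ℕ) then σ i else 0

/-- The `r`-restricted isometry constant `δ_r(𝒜)`. -/
noncomputable def ripConst {m n d : ℕ}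
    (A : Matrix (Fin m) (Fin n) ℝ →ₗ[ℝ] EuclideanSpace ℝ (Fin d)) (r : ℕ) : ℝ :=
  sInf {δ : ℝ | 0 ≤ δ ∧ ∀ X : Matrix (Fin m) (Fin n) ℝ, X.rank ≤ r →
    (1 - δ) * frobNorm X ^ 2 ≤ ‖A X‖ ^ 2 ∧ ‖A X‖ ^ 2 ≤ (1 + δ) * frobNorm X ^ 2}


lemma mulVecLin_toMatrix'' {m n : ℕ} (p : (Fin n → ℝ) →ₗ[ℝ] (Fin m → ℝ)) :
    (LinearMap.toMatrix' p).mulVecLin = p := by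
  ext x
  simp [Matrix.mulVecLin_apply, ← Matrix.toLin'_apply, Matrix.toLin'_toMatrix']

lemma matrix_rank_add_le {m n : ℕ} (A B : Matrix (Fin m) (Fin n) ℝ) :
    (A + B).rank ≤ A.rank + B.rank := by
  rw [Matrix.rank, Matrix.rank, Matrix.rank, Matrix.mulVecLin_add]
  calc Module.finrank ℝ ↥(LinearMap.range (A.mulVecLin + B.mulVecLin))
      ≤ Module.finrank ℝ ↥(LinearMap.range A.mulVecLin ⊔ LinearMap.range B.mulVecLin) :=
        Submodule.finrank_mono (by
          rintro y ⟨x, rfl⟩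
          exact Submodule.add_mem_sup ⟨x, rfl⟩ ⟨x, rfl⟩)
    _ ≤ _ := Submodule.finrank_add_le_finrank_add_finrank _ _

lemma exists_proj (m n : ℕ) (M : Matrix (Fin m) (Fin n) ℝ) :
    ∃ P : Matrix (Fin m) (Fin m) ℝ, P * P = P ∧ Pᵀ = P ∧ P * M = M ∧ P.rank ≤ M.rank := by
  let e : EuclideanSpace ℝ (Fin m) ≃ₗ[ℝ] (Fin m → ℝ) := WithLp.linearEquiv 2 ℝ (Fin m → ℝ)
  set U : Submodule ℝ (EuclideanSpace ℝ (Fin m)) :=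
    (LinearMap.range M.mulVecLin).comap e.toLinearMap with hU
  let p : (Fin m → ℝ) →ₗ[ℝ] (Fin m → ℝ) :=
    e.toLinearMap ∘ₗ U.starProjection.toLinearMap ∘ₗ e.symm.toLinearMap
  have hmem : ∀ x : Fin m → ℝ, p x ∈ LinearMap.range M.mulVecLin := fun x =>
    U.starProjection_apply_mem (e.symm x)
  have hid : ∀ x : Fin m → ℝ, x ∈ LinearMap.range M.mulVecLin → p x = x := fun x hx => by
    have hx' : e.symm x ∈ U := by simpa [U] using hx
    have := Submodule.starProjection_eq_self_iff.mpr hx'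
    simp only [p, LinearMap.comp_apply, LinearEquiv.coe_coe, ContinuousLinearMap.coe_coe, this,
      LinearEquiv.apply_symm_apply]
  refine ⟨LinearMap.toMatrix' p, ?_, ?_, ?_, ?_⟩
  · rw [← LinearMap.toMatrix'_comp]
    exact congrArg _ (LinearMap.ext fun x => hid (p x) (hmem x))
  · ext i j
    have h := U.inner_starProjection_left_eq_right
      (EuclideanSpace.single j (1:ℝ)) (EuclideanSpace.single i (1:ℝ))
    rw [EuclideanSpace.inner_single_left, EuclideanSpace.inner_single_right] at h
    simp only [_root_.map_one, one_mul, starRingEnd_apply, star_trivial, mul_one] at h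
    have hb : ∀ k : Fin m, e.symm (fun l => if l = k then (1:ℝ) else 0) = EuclideanSpace.single k (1:ℝ) := by
      intro k; ext l; simp [e, EuclideanSpace.single_apply]
    rw [Matrix.transpose_apply, LinearMap.toMatrix'_apply, LinearMap.toMatrix'_apply]
    simp only [p, LinearMap.comp_apply, LinearEquiv.coe_coe, ContinuousLinearMap.coe_coe, hb]
    exact h.symm
  · have h1 : p ∘ₗ M.mulVecLin = M.mulVecLin :=
      LinearMap.ext fun x => hid (M.mulVecLin x) ⟨x, rfl⟩
    have h2 := congrArg LinearMap.toMatrix' h1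
    have h3 : LinearMap.toMatrix' M.mulVecLin = M := by
      have h4 : M.mulVecLin = Matrix.toLin' M := by
        ext x; simp [Matrix.toLin'_apply, Matrix.mulVecLin_apply]
      rw [h4, LinearMap.toMatrix'_toLin']
    rwa [LinearMap.toMatrix'_comp, h3] at h2
  · rw [Matrix.rank, Matrix.rank, mulVecLin_toMatrix'']
    exact Submodule.finrank_mono (LinearMap.range_le_iff_comap.mpr
      (by simp only [Submodule.eq_top_iff']; exact fun x => hmem x))


theorem statement0 (m n : ℕ) (M N : Matrix (Fin m) (Fin n) ℝ) :
    ∃ N₁ N₂ : Matrix (Fin m) (Fin n) ℝ,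
      N = N₁ + N₂ ∧
      N₁.rank ≤ 2 * M.rank ∧
      M * N₂ᵀ = 0 ∧ Mᵀ * N₂ = 0 ∧
      Matrix.trace (N₂ᵀ * N₁) = 0 := by
  obtain ⟨P, hPP, hPt, hPM, hPr⟩ := exists_proj m n M
  obtain ⟨Q, hQQ, hQt, hQM, hQr⟩ := exists_proj n m Mᵀ
  have h1P : (1 - P) * P = 0 := by simp [Matrix.sub_mul, hPP]
  have hP1 : (1 - P) * (1 - P) = 1 - P := by
    simp [Matrix.sub_mul, Matrix.mul_sub, hPP]
  have hQ1 : Q * (1 - Q) = 0 := by simp [Matrix.mul_sub, hQQ]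
  refine ⟨P * N + (1 - P) * (N * Q), (1 - P) * N * (1 - Q), ?_, ?_, ?_, ?_, ?_⟩
  · simp only [Matrix.sub_mul, Matrix.mul_sub, Matrix.one_mul, Matrix.mul_one,
      Matrix.mul_assoc]
    abel
  · calc (P * N + (1 - P) * (N * Q)).rank
        ≤ (P * N).rank + ((1 - P) * (N * Q)).rank := matrix_rank_add_le _ _
      _ ≤ P.rank + (N * Q).rank :=
          add_le_add (Matrix.rank_mul_le_left _ _) (Matrix.rank_mul_le_right _ _)
      _ ≤ M.rank + Q.rank := add_le_add hPr (Matrix.rank_mul_le_right _ _)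
      _ ≤ M.rank + M.rank := add_le_add le_rfl (hQr.trans_eq (Matrix.rank_transpose M))
      _ = 2 * M.rank := (two_mul _).symm
  · have hMQ : M * Q = M := by
      have h := congrArg Matrix.transpose hQM
      rw [Matrix.transpose_mul, Matrix.transpose_transpose, hQt] at h
      exact h
    have hM1Q : M * (1 - Q) = 0 := by rw [Matrix.mul_sub, Matrix.mul_one, hMQ, sub_self]
    rw [Matrix.transpose_mul, Matrix.transpose_mul, ← Matrix.mul_assoc,
      Matrix.transpose_sub, Matrix.transpose_one, hQt, hM1Q, Matrix.zero_mul]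
  · have hMP : Mᵀ * (1 - P) = 0 := by
      have h := congrArg Matrix.transpose hPM
      rw [Matrix.transpose_mul, hPt] at h
      rw [Matrix.mul_sub, Matrix.mul_one, h, sub_self]
    rw [← Matrix.mul_assoc, ← Matrix.mul_assoc, hMP, Matrix.zero_mul, Matrix.zero_mul]
  · have hT : ((1 - P) * N * (1 - Q))ᵀ = (1 - Q) * Nᵀ * (1 - P) := by
      rw [Matrix.transpose_mul, Matrix.transpose_mul, Matrix.transpose_sub,
        Matrix.transpose_sub, Matrix.transpose_one, Matrix.transpose_one, hPt, hQt, Matrix.mul_assoc]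
    have term1 : (1 - Q) * Nᵀ * (1 - P) * (P * N) = 0 := by
      calc (1 - Q) * Nᵀ * (1 - P) * (P * N)
          = (1 - Q) * Nᵀ * ((1 - P) * P) * N := by simp only [Matrix.mul_assoc]
        _ = 0 := by rw [h1P, Matrix.mul_zero, Matrix.zero_mul]
    have term2 : (1 - Q) * Nᵀ * (1 - P) * ((1 - P) * (N * Q))
        = ((1 - Q) * Nᵀ * (1 - P) * N) * Q := by
      calc (1 - Q) * Nᵀ * (1 - P) * ((1 - P) * (N * Q))
          = (1 - Q) * Nᵀ * ((1 - P) * (1 - P)) * (N * Q) := by simp only [Matrix.mul_assoc]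
        _ = ((1 - Q) * Nᵀ * (1 - P) * N) * Q := by rw [hP1]; simp only [Matrix.mul_assoc]
    rw [hT, Matrix.mul_add, term1, term2, Matrix.trace_add, Matrix.trace_zero,
      Matrix.trace_mul_comm, ← Matrix.mul_assoc, ← Matrix.mul_assoc, ← Matrix.mul_assoc,
      hQ1, Matrix.zero_mul, Matrix.zero_mul, Matrix.zero_mul, Matrix.trace_zero, add_zero]
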